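/- Let V be a vector space over a field k, let φ be a finite potent endomorphism of V with AST-decomposition V = W_φ ⊕ U_φ (where W_φ is finite-dimensional, φ-invariant, φ restricts to an automorphism of W_φ, U_φ is φ-invariant and φ restricts to a nilpotent endomorphism of U_φ), and let L ⊆ V be a φ-invariant subspace. If φ restricted to L is an automorphism of L, then L is finite-dimensional and L ⊆ W_φ. -/

import Mathlib

/-- Lemma: if `φ` is finite potent with AST-decomposition `V = W ⊕ U` and `L` is a
`φ`-invariant subspace on which `φ` restricts to an automorphism, then `L` is
finite-dimensional and `L ⊆ W`. -/
theorem ast_invariant_auto_sub {k V : Type*} [Field k] [AddCommGroup V] [Module k V]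
    (φ : V →ₗ[k] V)
    (hfp : ∃ n : ℕ, FiniteDimensional k (LinearMap.range (φ ^ n)))
    (W U : Submodule k V) (hWU : IsCompl W U) [FiniteDimensional k W]
    (hW : ∀ x ∈ W, φ x ∈ W) (hU : ∀ x ∈ U, φ x ∈ U)
    (hWa : Function.Bijective (φ.restrict hW))
    (hUn : IsNilpotent (φ.restrict hU))
    (L : Submodule k V) (hL : ∀ x ∈ L, φ x ∈ L)
    (hLa : Function.Bijective (φ.restrict hL)) :
    FiniteDimensional k L ∧ L ≤ W := by
  obtain ⟨n, hn⟩ := hUn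
  have hsurj : ∀ m : ℕ, ∀ x ∈ L, ∃ y ∈ L, (φ ^ m) y = x := by
    intro m
    induction m with
    | zero => intro x hx; exact ⟨x, hx, rfl⟩
    | succ m ih =>
      intro x hx
      obtain ⟨z, hz⟩ := hLa.2 ⟨x, hx⟩
      obtain ⟨y, hyL, hy⟩ := ih z z.2
      refine ⟨y, hyL, ?_⟩
      have : (φ ^ (m + 1)) y = φ ((φ ^ m) y) := by
        rw [pow_succ']; rfl
      rw [this, hy]
      have := congrArg (Subtype.val) hz
      simpa [LinearMap.restrict_apply] using this
  have hLW : L ≤ W := by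
    intro x hx
    obtain ⟨y, hyL, hy⟩ := hsurj n x hx
    have hy' : y ∈ W ⊔ U := by rw [hWU.sup_eq_top]; trivial
    obtain ⟨w, hw, u, hu, rfl⟩ := Submodule.mem_sup.mp hy'
    have hun : (φ ^ n) u = 0 := by
      have := congrArg (fun f => (f ⟨u, hu⟩ : V)) hn
      rw [Module.End.pow_restrict] at this
      simpa [LinearMap.restrict_apply] using this
    have hwn : (φ ^ n) w ∈ W := Module.End.pow_apply_mem_of_forall_mem n hW w hw
    rw [← hy, map_add, hun, add_zero]
    exact hwn
  exact ⟨Submodule.finiteDimensional_of_le hLW, hLW⟩
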